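/- Let r be a rational number with r > 1 and r ∉ Z, and let H = ⟨rⁱ : i ∈ N₀⟩ be the Puiseux monoid generated by the powers of r. Then H is atomic with A(H) = {rⁱ : i ∈ N₀}, but H is not strongly primary. -/

import Mathlib

open Finset

private lemma PANSP.term_cast (r : ℚ) {i M : ℕ} (h : i ≤ M) :
    r ^ i * (r.den : ℚ) ^ M = (r.num : ℚ) ^ i * (r.den : ℚ) ^ (M - i) := by
  have h2 : (r * (r.den : ℚ)) ^ i = (r.num : ℚ) ^ i := by rw [Rat.mul_den_eq_num]
  calc r ^ i * (r.den : ℚ) ^ M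
      = (r * (r.den : ℚ)) ^ i * (r.den : ℚ) ^ (M - i) := by
        rw [mul_pow, mul_assoc, ← pow_add]
        congr 2
        omega
    _ = (r.num : ℚ) ^ i * (r.den : ℚ) ^ (M - i) := by rw [h2]

private lemma PANSP.sum_cast (r : ℚ) (c : ℕ → ℕ) (N M : ℕ) (h : N ≤ M) :
    (∑ i ∈ range (N + 1), (c i : ℚ) * r ^ i) * (r.den : ℚ) ^ M
      = ((∑ i ∈ range (N + 1), (c i : ℤ) * r.num ^ i * (r.den : ℤ) ^ (M - i) : ℤ) : ℚ) := by
  rw [Finset.sum_mul]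
  push_cast
  refine Finset.sum_congr rfl fun i hi => ?_
  have hi' : i ≤ M := by have := Finset.mem_range.mp hi; omega
  rw [mul_assoc, PANSP.term_cast r hi']
  ring

private lemma PANSP.sum_cast2 (r : ℚ) (n M : ℕ) (h : n ≤ M) :
    ((∑ i ∈ range n, r ^ (i + 1)) - 1) * (r.den : ℚ) ^ M
      = ((∑ i ∈ range n, r.num ^ (i + 1) * (r.den : ℤ) ^ (M - (i + 1)) - (r.den : ℤ) ^ M : ℤ) : ℚ) := by
  rw [sub_mul, one_mul, Finset.sum_mul]
  push_cast
  congr 1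
  refine Finset.sum_congr rfl fun i hi => ?_
  have hi' : i + 1 ≤ M := by have := Finset.mem_range.mp hi; omega
  rw [PANSP.term_cast r hi']

private lemma PANSP.cop (r : ℚ) : IsCoprime ((r.den : ℤ)) r.num := by
  rw [Int.isCoprime_iff_gcd_eq_one]
  have := r.reduced.symm
  simpa [Int.gcd, Int.natAbs_natCast] using this

private lemma PANSP.not_dvd (r : ℚ) (hden : 2 ≤ r.den) (k : ℕ) :
    ¬ ((r.den : ℤ) ∣ r.num ^ k) := by
  intro hdvd
  have h1 : r.den ∣ r.num.natAbs ^ k := by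
    have := Int.natAbs_dvd_natAbs.mpr hdvd
    simpa [Int.natAbs_pow, Int.natAbs_natCast] using this
  have h2 : r.den.Coprime (r.num.natAbs ^ k) := (r.reduced.symm).pow_right k
  have := Nat.Coprime.eq_one_of_dvd h2 h1
  omega

private lemma PANSP.pad (r : ℚ) (c : ℕ → ℕ) (N M : ℕ) (h : N ≤ M)
    (hsupp : ∀ i, N ≤ i → c i = 0) :
    ∑ i ∈ range M, (c i : ℚ) * r ^ i = ∑ i ∈ range N, (c i : ℚ) * r ^ i :=
  (Finset.sum_subset (Finset.range_subset_range.mpr h) (fun i _ hi => by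
     rw [hsupp i (by simpa using hi)]; simp)).symm

private lemma PANSP.padn (c : ℕ → ℕ) (N M : ℕ) (h : N ≤ M)
    (hsupp : ∀ i, N ≤ i → c i = 0) :
    ∑ i ∈ range M, c i = ∑ i ∈ range N, c i :=
  (Finset.sum_subset (Finset.range_subset_range.mpr h) (fun i _ hi =>
     hsupp i (by simpa using hi))).symm

private lemma PANSP.mem_iff_list (r : ℚ) (x : ℚ) :
    x ∈ AddSubmonoid.closure (Set.range fun i : ℕ => r ^ i) ↔
      ∃ l : List ℚ, (∀ y ∈ l, ∃ i : ℕ, y = r ^ i) ∧ l.sum = x := by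
  constructor
  · intro h
    obtain ⟨l, hl, hs⟩ := AddSubmonoid.exists_list_of_mem_closure h
    exact ⟨l, fun y hy => by obtain ⟨i, hi⟩ := hl y hy; exact ⟨i, hi.symm⟩, hs⟩
  · rintro ⟨l, hl, rfl⟩
    refine AddSubmonoid.list_sum_mem _ fun y hy => ?_
    obtain ⟨i, rfl⟩ := hl y hy
    exact AddSubmonoid.subset_closure ⟨i, rfl⟩

private lemma PANSP.list_sum_pos (r : ℚ) (hr : 1 < r) :
    ∀ l : List ℚ, (∀ y ∈ l, ∃ i : ℕ, y = r ^ i) →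
      0 ≤ l.sum ∧ (l ≠ [] → 0 < l.sum) := by
  intro l
  induction l with
  | nil => intro _; simp
  | cons a t ih =>
    intro hl
    obtain ⟨h0, _⟩ := ih (fun y hy => hl y (List.mem_cons_of_mem _ hy))
    obtain ⟨j, rfl⟩ := hl a (List.mem_cons_self)
    have hp : (0:ℚ) < r ^ j := pow_pos (by linarith) j
    constructor
    · simp only [List.sum_cons]; linarith
    · intro _; simp only [List.sum_cons]; linarith

private lemma PANSP.list_to_coeff (r : ℚ) :
    ∀ l : List ℚ, (∀ y ∈ l, ∃ i : ℕ, y = r ^ i) →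
      ∃ (N : ℕ) (c : ℕ → ℕ), (∀ i, N ≤ i → c i = 0) ∧
        (∑ i ∈ range N, (c i : ℚ) * r ^ i) = l.sum ∧
        (∑ i ∈ range N, c i) = l.length := by
  intro l
  induction l with
  | nil => exact fun _ => ⟨0, fun _ => 0, fun _ _ => rfl, by simp, by simp⟩
  | cons a t ih =>
    intro hl
    obtain ⟨N, c, hsupp, hsum, hlen⟩ := ih (fun y hy => hl y (List.mem_cons_of_mem _ hy))
    obtain ⟨j, rfl⟩ := hl a (List.mem_cons_self)
    set M := max N (j + 1) with hM
    have hNM : N ≤ M := le_max_left _ _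
    have hjM : j ∈ range M := Finset.mem_range.mpr (by omega)
    refine ⟨M, fun i => c i + (if i = j then 1 else 0), ?_, ?_, ?_⟩
    · intro i hi
      have h1 : c i = 0 := hsupp i (by omega)
      have h2 : i ≠ j := by omega
      simp [h1, h2]
    · have hcast : ∀ i ∈ range M,
          ((c i + (if i = j then 1 else 0) : ℕ) : ℚ) * r ^ i
            = (c i : ℚ) * r ^ i + (if i = j then r ^ i else 0) := by
        intro i _
        split_ifs with h <;> push_cast <;> ring
      rw [Finset.sum_congr rfl hcast, Finset.sum_add_distrib,
        Finset.sum_ite_eq' (range M) j (fun i => r ^ i), if_pos hjM,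
        PANSP.pad r c N M hNM hsupp, hsum, List.sum_cons]
      ring
    · rw [Finset.sum_add_distrib, Finset.sum_ite_eq' (range M) j (fun _ => 1), if_pos hjM,
        PANSP.padn c N M hNM hsupp, hlen, List.length_cons]

private lemma PANSP.keyR (r : ℚ) (hr : 1 < r) (hden : 2 ≤ r.den) (N n : ℕ) (hn : n ≤ N)
    (c : ℕ → ℕ) (h : ∑ i ∈ range (N + 1), (c i : ℚ) * r ^ i = r ^ n) :
    ∑ i ∈ range (N + 1), c i = 1 := by
  have hr0 : (0:ℚ) < r := by linarith
  have hterm : ∀ i ∈ range (N + 1), (c i : ℚ) * r ^ i ≤ r ^ n := by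
    intro i hi
    calc (c i : ℚ) * r ^ i ≤ ∑ j ∈ range (N + 1), (c j : ℚ) * r ^ j :=
          Finset.single_le_sum (f := fun j => (c j : ℚ) * r ^ j) (fun j _ => by positivity) hi
      _ = r ^ n := h
  have hhigh : ∀ i, n < i → i ∈ range (N + 1) → c i = 0 := by
    intro i hni hi
    by_contra hne
    have h1 : (1:ℚ) ≤ (c i : ℚ) := by exact_mod_cast Nat.one_le_iff_ne_zero.mpr hne
    have h2 : r ^ n < r ^ i := pow_lt_pow_right₀ hr hni
    have h3 : r ^ i ≤ (c i : ℚ) * r ^ i := le_mul_of_one_le_left (by positivity) h1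
    have := hterm i hi
    linarith
  have hnn : n ∈ range (N + 1) := Finset.mem_range.mpr (by omega)
  have hcn : c n ≤ 1 := by
    by_contra hc
    have h2 : (2:ℚ) ≤ (c n : ℚ) := by exact_mod_cast (by omega : 2 ≤ c n)
    have hp : (0:ℚ) < r ^ n := by positivity
    have := hterm n hnn
    nlinarith
  rcases Nat.lt_or_ge (c n) 1 with h0 | h1
  · exfalso
    have hcn0 : c n = 0 := by omega
    have hz : ∀ i ∈ range (N + 1), i ∉ range n → (c i : ℚ) * r ^ i = 0 := by
      intro i _ hi2
      have hni : n ≤ i := by simpa using hi2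
      rcases eq_or_lt_of_le hni with rfl | hlt
      · simp [hcn0]
      · simp [hhigh i hlt (by simpa using ‹i ∈ range (N+1)›)]
    have hred : ∑ i ∈ range n, (c i : ℚ) * r ^ i = r ^ n := by
      rw [Finset.sum_subset (Finset.range_subset_range.mpr (by omega : n ≤ N + 1)) hz]
      exact h
    rcases Nat.eq_zero_or_pos n with rfl | hn1
    · simp at hred
    obtain ⟨m, rfl⟩ : ∃ m, n = m + 1 := ⟨n - 1, by omega⟩
    -- integer identity
    have hq : (r ^ (m + 1)) * (r.den : ℚ) ^ (m + 1) = ((r.num ^ (m + 1) : ℤ) : ℚ) := by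
      push_cast
      rw [← mul_pow, Rat.mul_den_eq_num]
    have hInt : (∑ i ∈ range (m + 1), (c i : ℤ) * r.num ^ i * (r.den : ℤ) ^ ((m + 1) - i))
        = r.num ^ (m + 1) := by
      have h1 := congrArg (fun z => z * ((r.den : ℚ)) ^ (m + 1)) hred
      rw [PANSP.sum_cast r c m (m + 1) (by omega), hq] at h1
      exact_mod_cast h1
    have hdvd : (r.den : ℤ) ∣ r.num ^ (m + 1) := by
      rw [← hInt]
      refine Finset.dvd_sum fun i hi => ?_
      exact Dvd.dvd.mul_left (dvd_pow_self _ (by have := Finset.mem_range.mp hi; omega)) _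
    exact PANSP.not_dvd r hden (m + 1) hdvd
  · -- c n = 1
    have hcn1 : c n = 1 := by omega
    have hrest : ∑ i ∈ (range (N + 1)).erase n, (c i : ℚ) * r ^ i = 0 := by
      have := Finset.add_sum_erase (range (N + 1)) (fun i => (c i : ℚ) * r ^ i) hnn
      rw [h] at this
      have hc1 : (c n : ℚ) * r ^ n = r ^ n := by rw [hcn1]; push_cast; ring
      linarith [this, hc1]
    have hzero : ∀ i ∈ (range (N + 1)).erase n, (c i : ℚ) * r ^ i = 0 :=
      (Finset.sum_eq_zero_iff_of_nonneg (fun i _ => by positivity)).mp hrest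
    have hzero' : ∀ i ∈ (range (N + 1)).erase n, c i = 0 := by
      intro i hi
      have := hzero i hi
      have hp : (0:ℚ) < r ^ i := by positivity
      have : (c i : ℚ) = 0 := by
        rcases mul_eq_zero.mp this with h' | h'
        · exact h'
        · exact absurd h' (by positivity)
      exact_mod_cast this
    have := Finset.add_sum_erase (range (N + 1)) (fun i => c i) hnn
    rw [Finset.sum_eq_zero hzero'] at this
    omega

private lemma PANSP.keyQ (r : ℚ) (hr : 1 < r) (hden : 2 ≤ r.den) :
    ∀ N : ℕ, ∀ n, n ≤ N → ∀ c : ℕ → ℕ,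
      (∑ i ∈ range (N + 1), (c i : ℚ) * r ^ i) ≠ (∑ i ∈ range n, r ^ (i + 1)) - 1 := by
  intro N
  induction N using Nat.strong_induction_on with
  | _ N IH =>
  intro n hn c heq
  have hr0 : (0:ℚ) < r := by linarith
  rcases Nat.eq_zero_or_pos n with rfl | hn1
  · simp only [Finset.range_zero, Finset.sum_empty, zero_sub] at heq
    have h0 : (0:ℚ) ≤ ∑ i ∈ range (N + 1), (c i : ℚ) * r ^ i := by positivity
    rw [heq] at h0
    linarith
  obtain ⟨m, rfl⟩ : ∃ m, N = m + 1 := ⟨N - 1, by omega⟩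
  -- integer identity, multiplier (m+1)
  have hInt : (∑ i ∈ range (m + 2), (c i : ℤ) * r.num ^ i * (r.den : ℤ) ^ ((m + 1) - i))
      = (∑ i ∈ range n, r.num ^ (i + 1) * (r.den : ℤ) ^ ((m + 1) - (i + 1)))
        - (r.den : ℤ) ^ (m + 1) := by
    have h1 := congrArg (fun z => z * ((r.den : ℚ)) ^ (m + 1)) heq
    rw [PANSP.sum_cast r c (m + 1) (m + 1) le_rfl, PANSP.sum_cast2 r n (m + 1) hn] at h1
    exact_mod_cast h1
  have hqLL : (r.den : ℤ) ∣ ∑ i ∈ range (m + 1), (c i : ℤ) * r.num ^ i * (r.den : ℤ) ^ ((m + 1) - i) :=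
    Finset.dvd_sum fun i hi =>
      Dvd.dvd.mul_left (dvd_pow_self _ (by have := Finset.mem_range.mp hi; omega)) _
  have hSsplit : (∑ i ∈ range (m + 2), (c i : ℤ) * r.num ^ i * (r.den : ℤ) ^ ((m + 1) - i))
      = (∑ i ∈ range (m + 1), (c i : ℤ) * r.num ^ i * (r.den : ℤ) ^ ((m + 1) - i))
        + (c (m + 1) : ℤ) * r.num ^ (m + 1) := by
    rw [Finset.sum_range_succ]
    simp
  rcases lt_or_eq_of_le hn with hlt | rfl
  · -- n < m + 1, i.e. n ≤ m
    have hnm : n ≤ m := by omega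
    have hqR : (r.den : ℤ) ∣
        (∑ i ∈ range n, r.num ^ (i + 1) * (r.den : ℤ) ^ ((m + 1) - (i + 1)))
          - (r.den : ℤ) ^ (m + 1) := by
      refine dvd_sub (Finset.dvd_sum fun i hi => ?_) (dvd_pow_self _ (by omega))
      exact Dvd.dvd.mul_left (dvd_pow_self _ (by have := Finset.mem_range.mp hi; omega)) _
    have hqc : (r.den : ℤ) ∣ (c (m + 1) : ℤ) * r.num ^ (m + 1) := by
      have e : (c (m + 1) : ℤ) * r.num ^ (m + 1)
          = ((∑ i ∈ range n, r.num ^ (i + 1) * (r.den : ℤ) ^ ((m + 1) - (i + 1)))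
              - (r.den : ℤ) ^ (m + 1))
            - (∑ i ∈ range (m + 1), (c i : ℤ) * r.num ^ i * (r.den : ℤ) ^ ((m + 1) - i)) := by
        rw [← hInt, hSsplit]; ring
      rw [e]
      exact dvd_sub hqR hqLL
    have hqcN : (r.den : ℤ) ∣ (c (m + 1) : ℤ) :=
      ((PANSP.cop r).pow_right).dvd_of_dvd_mul_right hqc
    have hdvdN : r.den ∣ c (m + 1) := by exact_mod_cast hqcN
    set t := c (m + 1) / r.den with ht
    have hct : c (m + 1) = r.den * t := (Nat.mul_div_cancel' hdvdN).symm
    have hnumpos : (0:ℤ) < r.num := Rat.num_pos.mpr (by linarith)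
    have habs : ((r.num.natAbs : ℕ) : ℚ) = (r.num : ℚ) := by
      rw [Nat.cast_natAbs]
      exact congrArg (Int.cast : ℤ → ℚ) (abs_of_nonneg hnumpos.le)
    set c' : ℕ → ℕ := fun i => c i + (if i = m then t * r.num.natAbs else 0) with hc'
    have hc'sum : ∑ i ∈ range (m + 1), (c' i : ℚ) * r ^ i
        = ∑ i ∈ range (m + 2), (c i : ℚ) * r ^ i := by
      have hcast : ∀ i ∈ range (m + 1),
          (c' i : ℚ) * r ^ i = (c i : ℚ) * r ^ i
            + (if i = m then ((t * r.num.natAbs : ℕ) : ℚ) * r ^ i else 0) := by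
        intro i _
        simp only [hc']
        split_ifs with h <;> push_cast <;> ring
      have hmm : m ∈ range (m + 1) := Finset.mem_range.mpr (by omega)
      rw [Finset.sum_congr rfl hcast, Finset.sum_add_distrib,
        Finset.sum_ite_eq' (range (m + 1)) m (fun i => ((t * r.num.natAbs : ℕ) : ℚ) * r ^ i),
        if_pos hmm, Finset.sum_range_succ (fun i => (c i : ℚ) * r ^ i) (m + 1)]
      have : ((t * r.num.natAbs : ℕ) : ℚ) * r ^ m = (c (m + 1) : ℚ) * r ^ (m + 1) := by
        rw [hct]
        push_cast [habs]
        rw [← Rat.mul_den_eq_num]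
        ring
      rw [this]
    exact IH m (by omega) n hnm c' (by rw [hc'sum]; exact heq)
  · -- n = m + 1
    have hRsplit : (∑ i ∈ range (m + 1), r.num ^ (i + 1) * (r.den : ℤ) ^ ((m + 1) - (i + 1)))
        = (∑ i ∈ range m, r.num ^ (i + 1) * (r.den : ℤ) ^ ((m + 1) - (i + 1)))
          + r.num ^ (m + 1) := by
      rw [Finset.sum_range_succ]
      simp
    have hqRR : (r.den : ℤ) ∣
        (∑ i ∈ range m, r.num ^ (i + 1) * (r.den : ℤ) ^ ((m + 1) - (i + 1)))
          - (r.den : ℤ) ^ (m + 1) := by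
      refine dvd_sub (Finset.dvd_sum fun i hi => ?_) (dvd_pow_self _ (by omega))
      exact Dvd.dvd.mul_left (dvd_pow_self _ (by have := Finset.mem_range.mp hi; omega)) _
    have hqd : (r.den : ℤ) ∣ ((c (m + 1) : ℤ) - 1) * r.num ^ (m + 1) := by
      have e : ((c (m + 1) : ℤ) - 1) * r.num ^ (m + 1)
          = ((∑ i ∈ range m, r.num ^ (i + 1) * (r.den : ℤ) ^ ((m + 1) - (i + 1)))
              - (r.den : ℤ) ^ (m + 1))
            - (∑ i ∈ range (m + 1), (c i : ℤ) * r.num ^ i * (r.den : ℤ) ^ ((m + 1) - i)) := by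
        rw [sub_mul, one_mul]
        have h1 := hInt
        rw [hSsplit, hRsplit] at h1
        linarith
      rw [e]
      exact dvd_sub hqRR hqLL
    have hqd1 : (r.den : ℤ) ∣ ((c (m + 1) : ℤ) - 1) :=
      ((PANSP.cop r).pow_right).dvd_of_dvd_mul_right hqd
    -- bound: c (m+1) ≤ r.den
    have hterm : (c (m + 1) : ℚ) * r ^ (m + 1) ≤ (∑ i ∈ range (m + 1), r ^ (i + 1)) - 1 := by
      calc (c (m + 1) : ℚ) * r ^ (m + 1)
          ≤ ∑ i ∈ range (m + 2), (c i : ℚ) * r ^ i :=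
            Finset.single_le_sum (f := fun j => (c j : ℚ) * r ^ j) (fun j _ => by positivity)
              (Finset.mem_range.mpr (by omega))
        _ = _ := heq
    set G : ℚ := ∑ i ∈ range (m + 1), r ^ i with hGdef
    have hG : G * (r - 1) = r ^ (m + 1) - 1 := geom_sum_mul r (m + 1)
    have hsum2 : ∑ i ∈ range (m + 1), r ^ (i + 1) = r * G := by
      rw [hGdef, Finset.mul_sum]
      exact Finset.sum_congr rfl fun i _ => (pow_succ' r i)
    have hcle : c (m + 1) ≤ r.den := by
      by_contra hc
      have hge : ((r.den : ℚ) + 1) ≤ (c (m + 1) : ℚ) := by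
        exact_mod_cast (by omega : r.den + 1 ≤ c (m + 1))
      have hpow : (0:ℚ) < r ^ (m + 1) := by positivity
      have h2 : ((r.den : ℚ) + 1) * r ^ (m + 1) ≤ r * G - 1 := by
        calc ((r.den : ℚ) + 1) * r ^ (m + 1) ≤ (c (m + 1) : ℚ) * r ^ (m + 1) :=
              mul_le_mul_of_nonneg_right hge (le_of_lt hpow)
          _ ≤ (∑ i ∈ range (m + 1), r ^ (i + 1)) - 1 := hterm
          _ = r * G - 1 := by rw [hsum2]
      have hD := mul_le_mul_of_nonneg_right h2 (show (0:ℚ) ≤ r - 1 by linarith)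
      have hE : (r * G - 1) * (r - 1) = r * (r ^ (m + 1) - 1) - (r - 1) := by
        have e : (r * G - 1) * (r - 1) = r * (G * (r - 1)) - (r - 1) := by ring
        rw [e, hG]
      rw [hE] at hD
      -- hD : ((q+1) * r^(m+1)) * (r-1) ≤ r * (r^(m+1) - 1) - (r - 1)
      have hqr : r * (r.den : ℚ) = (r.num : ℚ) := Rat.mul_den_eq_num r
      have hpq : (r.den : ℚ) + 1 ≤ (r.num : ℚ) := by
        have h1' : (r.den : ℚ) < (r.num : ℚ) := by
          have : (r.den : ℚ) * 1 < (r.den : ℚ) * r := by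
            have : (0:ℚ) < (r.den : ℚ) := by exact_mod_cast r.pos
            nlinarith
          nlinarith [hqr]
        have h2' : (r.den : ℤ) < r.num := by exact_mod_cast h1'
        have : (r.den : ℤ) + 1 ≤ r.num := by omega
        exact_mod_cast this
      have hA : r ≤ ((r.den : ℚ) + 1) * (r - 1) := by nlinarith [hqr, hpq]
      have hB : r * r ^ (m + 1) ≤ (((r.den : ℚ) + 1) * (r - 1)) * r ^ (m + 1) :=
        mul_le_mul_of_nonneg_right hA (le_of_lt hpow)
      nlinarith [hD, hB, hpow]
    -- conclude c (m+1) = 1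
    have hc1 : c (m + 1) = 1 := by
      have hd : (r.den : ℤ) ∣ ((c (m + 1) : ℤ) - 1) := hqd1
      rcases eq_or_ne ((c (m + 1) : ℤ) - 1) 0 with he | hne
      · omega
      · exfalso
        have habs' := Int.le_of_dvd (abs_pos.mpr hne) ((dvd_abs _ _).mpr hd)
        have hle : (c (m + 1) : ℤ) ≤ (r.den : ℤ) := by exact_mod_cast hcle
        have hq2 : (2:ℤ) ≤ (r.den : ℤ) := by exact_mod_cast hden
        rcases abs_cases ((c (m + 1) : ℤ) - 1) with ⟨he2, _⟩ | ⟨he2, _⟩ <;> omega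
    -- peel off the top term
    have hfin : ∑ i ∈ range (m + 1), (c i : ℚ) * r ^ i
        = (∑ i ∈ range m, r ^ (i + 1)) - 1 := by
      have h1 : ∑ i ∈ range (m + 2), (c i : ℚ) * r ^ i
          = ∑ i ∈ range (m + 1), (c i : ℚ) * r ^ i + r ^ (m + 1) := by
        rw [Finset.sum_range_succ, hc1]
        push_cast
        ring
      have h2 : ∑ i ∈ range (m + 1), r ^ (i + 1)
          = ∑ i ∈ range m, r ^ (i + 1) + r ^ (m + 1) := Finset.sum_range_succ _ m
      rw [h1, h2] at heq
      linarith
    exact IH m (by omega) m le_rfl c hfin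

/-- For rational r > 1 with r ∉ ℤ, the Puiseux monoid H = ⟨rⁱ : i ∈ ℕ₀⟩ is
atomic with atoms exactly the powers of r, but it is not strongly primary. -/
theorem powers_atomic_not_stronglyPrimary (r : ℚ) (hr : 1 < r)
    (hrz : ¬∃ z : ℤ, r = (z : ℚ)) :
    ∀ H : AddSubmonoid ℚ,
      H = AddSubmonoid.closure (Set.range fun i : ℕ => r ^ i) →
    ∀ A : Set ℚ, A = {u : ℚ | u ∈ H ∧ u ≠ 0 ∧
        ¬∃ x ∈ H, ∃ y ∈ H, x ≠ 0 ∧ y ≠ 0 ∧ u = x + y} →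
    (∀ a ∈ H, a ≠ 0 → ∃ (k : ℕ) (f : Fin k → ℚ),
        (∀ i, f i ∈ A) ∧ a = ∑ i, f i) ∧
    (A = Set.range fun i : ℕ => r ^ i) ∧
    ¬(∀ a ∈ H, a ≠ 0 → ∃ n : ℕ, 0 < n ∧ ∀ f : Fin n → ℚ,
        (∀ i, f i ∈ H ∧ f i ≠ 0) → ∃ h ∈ H, (∑ i, f i) = a + h) := by
  intro H hH A hA
  subst hH
  have hr0 : (0:ℚ) < r := by linarith
  have hden : 2 ≤ r.den := by
    by_contra hd
    have h1 : r.den = 1 := by have := r.pos; omega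
    exact hrz ⟨r.num, by rw [← Rat.num_div_den r, h1]; simp⟩
  set H := AddSubmonoid.closure (Set.range fun i : ℕ => r ^ i) with hHdef
  have hpow_mem : ∀ i : ℕ, r ^ i ∈ H := fun i => AddSubmonoid.subset_closure ⟨i, rfl⟩
  -- A = range of powers
  have hAeq : A = Set.range fun i : ℕ => r ^ i := by
    rw [hA]
    ext u
    constructor
    · rintro ⟨huH, hu0, hns⟩
      obtain ⟨l, hl, hsum⟩ := (PANSP.mem_iff_list r u).mp huH
      match l, hl, hsum with
      | [], _, hsum => exact absurd hsum.symm hu0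
      | [a], hl, hsum =>
        obtain ⟨i, rfl⟩ := hl a (List.mem_cons_self)
        exact ⟨i, by simpa using hsum⟩
      | a :: b :: tl, hl, hsum =>
        exfalso
        apply hns
        obtain ⟨j, rfl⟩ := hl a (List.mem_cons_self)
        refine ⟨r ^ j, hpow_mem j, (b :: tl).sum, ?_, ?_, ?_, ?_⟩
        · exact (PANSP.mem_iff_list r _).mpr
            ⟨b :: tl, fun y hy => hl y (List.mem_cons_of_mem _ hy), rfl⟩
        · exact ne_of_gt (pow_pos hr0 j)
        · have := (PANSP.list_sum_pos r hr (b :: tl)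
            (fun y hy => hl y (List.mem_cons_of_mem _ hy))).2 (by simp)
          linarith
        · rw [← hsum, List.sum_cons]
    · rintro ⟨k, rfl⟩
      refine ⟨hpow_mem k, ne_of_gt (pow_pos hr0 k), ?_⟩
      rintro ⟨x, hx, y, hy, hx0, hy0, hxy⟩
      obtain ⟨lx, hlx, hsx⟩ := (PANSP.mem_iff_list r x).mp hx
      obtain ⟨ly, hly, hsy⟩ := (PANSP.mem_iff_list r y).mp hy
      have hl : ∀ z ∈ lx ++ ly, ∃ i : ℕ, z = r ^ i := by
        intro z hz
        rcases List.mem_append.mp hz with h | h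
        · exact hlx z h
        · exact hly z h
      obtain ⟨N, c, hsupp, hs, hlen⟩ := PANSP.list_to_coeff r (lx ++ ly) hl
      have hsum' : ∑ i ∈ range N, (c i : ℚ) * r ^ i = r ^ k := by
        rw [hs, List.sum_append, hsx, hsy, ← hxy]
      have hlx0 : lx ≠ [] := by rintro rfl; exact hx0 hsx.symm
      have hly0 : ly ≠ [] := by rintro rfl; exact hy0 hsy.symm
      have hlen2 : 2 ≤ (lx ++ ly).length := by
        rw [List.length_append]
        have := List.length_pos_iff.mpr hlx0
        have := List.length_pos_iff.mpr hly0
        omega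
      set M := max N k with hM
      have hpadded : ∑ i ∈ range (M + 1), (c i : ℚ) * r ^ i = r ^ k := by
        rw [PANSP.pad r c N (M + 1) (by omega) hsupp]
        exact hsum'
      have h1 := PANSP.keyR r hr hden M k (le_max_right _ _) c hpadded
      rw [PANSP.padn c N (M + 1) (by omega) hsupp, hlen] at h1
      omega
  refine ⟨?_, hAeq, ?_⟩
  · -- atomicity
    intro a haH ha0
    obtain ⟨l, hl, hsum⟩ := (PANSP.mem_iff_list r a).mp haH
    refine ⟨l.length, fun i => l.get i, ?_, ?_⟩
    · intro i
      obtain ⟨j, hj⟩ := hl (l.get i) (List.get_mem l i)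
      rw [hAeq]
      exact ⟨j, hj.symm⟩
    · exact hsum.symm.trans (Fin.sum_univ_getElem l).symm
  · -- not strongly primary
    intro hSP
    have h1H : (1:ℚ) ∈ H := by simpa using hpow_mem 0
    obtain ⟨n, hn0, hf⟩ := hSP 1 h1H one_ne_zero
    obtain ⟨h, hhH, hsum⟩ := hf (fun i : Fin n => r ^ ((i : ℕ) + 1))
      (fun i => ⟨hpow_mem _, ne_of_gt (pow_pos hr0 _)⟩)
    have hsum' : ∑ i ∈ range n, r ^ (i + 1) = 1 + h := by
      rw [← Fin.sum_univ_eq_sum_range (fun i => r ^ (i + 1)) n]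
      exact hsum
    obtain ⟨l, hl, hls⟩ := (PANSP.mem_iff_list r h).mp hhH
    obtain ⟨N, c, hsupp, hs, _⟩ := PANSP.list_to_coeff r l hl
    set M := max N n with hM
    have hpadded : ∑ i ∈ range (M + 1), (c i : ℚ) * r ^ i
        = (∑ i ∈ range n, r ^ (i + 1)) - 1 := by
      rw [PANSP.pad r c N (M + 1) (by omega) hsupp, hs, hls]
      linarith
    exact PANSP.keyQ r hr hden M n (le_max_right _ _) c hpadded
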